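/- Let L be a totally imaginary quadratic extension of the totally real field K. Then for every unit u of the ring R_{2,L}, the square u² lies in K; moreover u² belongs to R_{2,K} and is a unit of R_{2,K}. In short, (R_{2,L}ˣ)² ⊆ R_{2,K}ˣ. -/

import Mathlib

open Complex

noncomputable section

/-- The ring of integers of a subfield `L ⊆ ℂ`: the elements of `L` that are integral
over `ℤ`, viewed as a subring of `ℂ`. -/
def ringOfInt (L : Subfield ℂ) : Subring ℂ where
  carrier := {x : ℂ | x ∈ L ∧ IsIntegral ℤ x}
  zero_mem' := ⟨L.zero_mem, isIntegral_zero⟩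
  one_mem' := ⟨L.one_mem, isIntegral_one⟩
  add_mem' := fun hx hy => ⟨L.add_mem hx.1 hy.1, hx.2.add hy.2⟩
  mul_mem' := fun hx hy => ⟨L.mul_mem hx.1 hy.1, hx.2.mul hy.2⟩
  neg_mem' := fun hx => ⟨L.neg_mem hx.1, hx.2.neg⟩

lemma ringOfInt_mem_subfield {L : Subfield ℂ} {x : ℂ} (hx : x ∈ ringOfInt L) : x ∈ L := hx.1

/-- The underlying set of the ring `R_{m,L} = {x ∈ O_L : ∃ a ∈ O_L, ∃ j, 0 ≤ j < m, x = j + m·a}`. -/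
def Rset (m : ℕ) (L : Subfield ℂ) : Set ℂ :=
  {x : ℂ | x ∈ ringOfInt L ∧
    ∃ a ∈ ringOfInt L, ∃ j : ℤ, 0 ≤ j ∧ j < (m : ℤ) ∧ x = (j : ℂ) + (m : ℂ) * a}

lemma Rset_norm {m : ℕ} (hm : m ≠ 0) {L : Subfield ℂ} {x : ℂ} (hx : x ∈ ringOfInt L)
    {a : ℂ} (ha : a ∈ ringOfInt L) {j : ℤ} (h : x = (j : ℂ) + (m : ℂ) * a) :
    x ∈ Rset m L := by
  have hm' : (0 : ℤ) < m := by exact_mod_cast Nat.pos_of_ne_zero hm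
  refine ⟨hx, a + ((j / (m : ℤ) : ℤ) : ℂ), ?_, j % m,
    Int.emod_nonneg j (by exact_mod_cast hm), Int.emod_lt_of_pos j hm', ?_⟩
  · exact (ringOfInt L).add_mem ha (intCast_mem (ringOfInt L) _)
  · have key : ((m : ℤ) * (j / (m : ℤ)) + j % (m : ℤ) : ℤ) = j := Int.mul_ediv_add_emod j m
    have key' := congrArg (Int.cast : ℤ → ℂ) key
    push_cast at key'
    rw [h]
    linear_combination -key'

/-- The ring `R_{m,L}`, as a subring of `ℂ`. -/
def Rring (m : ℕ) (hm : m ≠ 0) (L : Subfield ℂ) : Subring ℂ where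
  carrier := Rset m L
  zero_mem' := Rset_norm hm (ringOfInt L).zero_mem (ringOfInt L).zero_mem (j := 0) (by simp)
  one_mem' := Rset_norm hm (ringOfInt L).one_mem (ringOfInt L).zero_mem (j := 1) (by simp)
  add_mem' := by
    rintro x y ⟨hx, a, ha, j, _, _, rfl⟩ ⟨hy, b, hb, k, _, _, rfl⟩
    exact Rset_norm hm ((ringOfInt L).add_mem hx hy) ((ringOfInt L).add_mem ha hb)
      (j := j + k) (by push_cast; ring)
  mul_mem' := by
    rintro x y ⟨hx, a, ha, j, _, _, rfl⟩ ⟨hy, b, hb, k, _, _, rfl⟩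
    refine Rset_norm hm ((ringOfInt L).mul_mem hx hy)
      (a := (j : ℂ) * b + (k : ℂ) * a + (m : ℂ) * (a * b)) ?_ (j := j * k) (by push_cast; ring)
    exact (ringOfInt L).add_mem
      ((ringOfInt L).add_mem ((ringOfInt L).mul_mem (intCast_mem _ j) hb)
        ((ringOfInt L).mul_mem (intCast_mem _ k) ha))
      ((ringOfInt L).mul_mem (natCast_mem _ m) ((ringOfInt L).mul_mem ha hb))
  neg_mem' := by
    rintro x ⟨hx, a, ha, j, _, _, rfl⟩
    exact Rset_norm hm ((ringOfInt L).neg_mem hx) ((ringOfInt L).neg_mem ha)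
      (j := -j) (by push_cast; ring)

lemma twoNZ : (2 : ℕ) ≠ 0 := by norm_num

/-- A subfield of `ℂ` is totally real if every embedding into `ℂ` has real image. -/
def IsTotallyRealSubfield (K : Subfield ℂ) : Prop :=
  ∀ (σ : K →+* ℂ) (x : K), (σ x).im = 0

/-- A subfield of `ℂ` is totally imaginary if no embedding into `ℂ` has real image. -/
def IsTotallyImaginarySubfield (L : Subfield ℂ) : Prop :=
  ∀ σ : L →+* ℂ, ∃ x : L, (σ x).im ≠ 0

/-- `L` is a totally imaginary quadratic extension of the totally real field `K`:
`K ⊆ L ⊆ ℂ` are algebraic over `ℚ`, `L` is closed under complex conjugation,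
`[L : K] = 2`, `K` is totally real and `L` is totally imaginary. -/
structure IsTIQExt (K L : Subfield ℂ) : Prop where
  le : K ≤ L
  alg : ∀ x : L, IsAlgebraic ℚ (x : ℂ)
  conj_closed : ∀ x ∈ L, (starRingEnd ℂ) x ∈ L
  tot_real : IsTotallyRealSubfield K
  tot_imaginary : IsTotallyImaginarySubfield L
  deg : letI := (Subfield.inclusion le).toAlgebra; Module.finrank K L = 2

/-- An algebraic number `α ∈ ℂ` is totally real if all complex roots of its minimal
polynomial over `ℚ` are real. -/
def TotallyRealNum (α : ℂ) : Prop :=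
  IsAlgebraic ℚ α ∧ ∀ z : ℂ, Polynomial.aeval z (minpoly ℚ α) = 0 → z.im = 0

/-- The set `X₀ = {u₁² + u₂² − u₃² − u₄² : uᵢ ∈ R_{2,L}ˣ}`. -/
def X0 (L : Subfield ℂ) : Set ℂ :=
  {x : ℂ | ∃ u₁ u₂ u₃ u₄ : (Rring 2 twoNZ L)ˣ,
    x = ((u₁ : Rring 2 twoNZ L) : ℂ) ^ 2 + ((u₂ : Rring 2 twoNZ L) : ℂ) ^ 2
      - ((u₃ : Rring 2 twoNZ L) : ℂ) ^ 2 - ((u₄ : Rring 2 twoNZ L) : ℂ) ^ 2}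

/-- The set `X₁ = {d ∈ O_L : 32·d ∈ X₀}`. -/
def X1 (L : Subfield ℂ) : Set ℂ :=
  {d : ℂ | d ∈ ringOfInt L ∧ 32 * d ∈ X0 L}

/-- The set `X = {α ∈ O_L : ∃ x₁, x₂ ∈ X₁, 4·α = x₁ − x₂}`. -/
def XX (L : Subfield ℂ) : Set ℂ :=
  {α : ℂ | α ∈ ringOfInt L ∧ ∃ x₁ ∈ X1 L, ∃ x₂ ∈ X1 L, 4 * α = x₁ - x₂}

/-- The set of all totally real algebraic numbers (the field `ℚ^tr`). -/
def QtrSet : Set ℂ := {z : ℂ | TotallyRealNum z}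

/-- The field `ℚ^tr(i)`, the subfield of `ℂ` generated by all totally real numbers and `i`. -/
def QtrI : Subfield ℂ := Subfield.closure (QtrSet ∪ {Complex.I})



/-! ### Auxiliary lemmas -/

lemma conj_mem_ringOfInt {L : Subfield ℂ} (hc : ∀ x ∈ L, (starRingEnd ℂ) x ∈ L)
    {x : ℂ} (hx : x ∈ ringOfInt L) : (starRingEnd ℂ) x ∈ ringOfInt L :=
  ⟨hc x hx.1, hx.2.map (starRingEnd ℂ).toIntAlgHom⟩

/-- Complex conjugation as a ring endomorphism of a conjugation-closed subfield. -/
def conjL (L : Subfield ℂ) (hc : ∀ x ∈ L, (starRingEnd ℂ) x ∈ L) : ↥L →+* ↥L where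
  toFun x := ⟨(starRingEnd ℂ) x, hc x x.2⟩
  map_one' := by ext; simp
  map_mul' x y := by ext; simp
  map_zero' := by ext; simp
  map_add' x y := by ext; simp

lemma not_integral_half : ¬ IsIntegral ℤ ((2 : ℂ)⁻¹) := by
  intro hint
  have h2 : ((2 : ℂ))⁻¹ = algebraMap ℚ ℂ (2⁻¹ : ℚ) := by norm_num
  rw [h2, isIntegral_algebraMap_iff (algebraMap ℚ ℂ).injective] at hint
  obtain ⟨n, hn⟩ := IsIntegrallyClosed.isIntegral_iff.mp hint
  have hq : (n : ℚ) = 2⁻¹ := by exact_mod_cast hn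
  have h1 : ((2 * n : ℤ) : ℚ) = 1 := by push_cast; rw [hq]; norm_num
  have h2' : (2 * n : ℤ) = 1 := by exact_mod_cast h1
  omega

lemma unit_shape (L : Subfield ℂ) (u : (Rring 2 twoNZ L)ˣ) :
    ∃ a ∈ ringOfInt L, ((u : Rring 2 twoNZ L) : ℂ) = 1 + 2 * a := by
  have hset : ((u : Rring 2 twoNZ L) : ℂ) ∈ Rset 2 L := (u : Rring 2 twoNZ L).2
  obtain ⟨hmem, a, ha, j, hj0, hj2, hEq⟩ := hset
  have hVset : (((u⁻¹ : (Rring 2 twoNZ L)ˣ) : Rring 2 twoNZ L) : ℂ) ∈ Rset 2 L :=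
    ((u⁻¹ : (Rring 2 twoNZ L)ˣ) : Rring 2 twoNZ L).2
  have hUV : ((u : Rring 2 twoNZ L) : ℂ) *
      (((u⁻¹ : (Rring 2 twoNZ L)ˣ) : Rring 2 twoNZ L) : ℂ) = 1 := by
    exact_mod_cast congrArg (fun x : Rring 2 twoNZ L => (x : ℂ)) u.mul_inv
  interval_cases j
  · -- j = 0 : impossible
    exfalso
    have hEq' : ((u : Rring 2 twoNZ L) : ℂ) = 2 * a := by rw [hEq]; push_cast; ring
    have hmul : a * (((u⁻¹ : (Rring 2 twoNZ L)ˣ) : Rring 2 twoNZ L) : ℂ) * 2 = 1 := by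
      rw [hEq'] at hUV; linear_combination hUV
    have hhalf : a * (((u⁻¹ : (Rring 2 twoNZ L)ˣ) : Rring 2 twoNZ L) : ℂ) = (2 : ℂ)⁻¹ :=
      eq_inv_of_mul_eq_one_left hmul
    exact not_integral_half (hhalf ▸ ha.2.mul hVset.1.2)
  · exact ⟨a, ha, by rw [hEq]; push_cast; ring⟩

lemma multiset_prod_lt_one (s : Multiset ℝ) (h0 : s ≠ 0) (h : ∀ x ∈ s, 0 ≤ x ∧ x < 1) :
    s.prod < 1 := by
  induction s using Multiset.induction with
  | empty => exact absurd rfl h0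
  | cons a s ih =>
    rw [Multiset.prod_cons]
    have ha := h a (Multiset.mem_cons_self a s)
    rcases eq_or_ne s 0 with rfl | hs
    · simpa using ha.2
    · have hs' := ih hs fun x hx => h x (Multiset.mem_cons_of_mem hx)
      have hnn : 0 ≤ s.prod :=
        Multiset.prod_nonneg fun x hx => (h x (Multiset.mem_cons_of_mem hx)).1
      calc a * s.prod ≤ 1 * s.prod :=
            mul_le_mul_of_nonneg_right (le_of_lt ha.2) hnn
        _ = s.prod := one_mul _
        _ < 1 := hs'

lemma abs_sub_one_lt_two {z : ℂ} (hz : ‖z‖ = 1) (hz1 : z ≠ -1) :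
    ‖z - 1‖ < 2 := by
  have hn : Complex.normSq z = 1 := by
    rw [← Complex.sq_norm, hz]; norm_num
  rw [Complex.normSq_apply] at hn
  have hre : -1 < z.re := by
    rcases lt_or_eq_of_le (show -1 ≤ z.re by nlinarith) with h | h
    · exact h
    · exfalso
      apply hz1
      have him : z.im = 0 := by nlinarith
      apply Complex.ext <;> simp [← h, him]
  have habs : ‖z - 1‖ ^ 2 = Complex.normSq (z - 1) := Complex.sq_norm _
  rw [Complex.normSq_apply] at habs
  simp only [Complex.sub_re, Complex.sub_im, Complex.one_re, Complex.one_im] at habs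
  nlinarith [norm_nonneg (z - 1)]

/-- A subfield `L ⊆ ℂ` whose elements are algebraic over `ℚ` is an algebraic extension. -/
lemma algebraicL (L : Subfield ℂ) (halg : ∀ x : ↥L, IsAlgebraic ℚ (x : ℂ)) :
    Algebra.IsAlgebraic ℚ ↥L := by
  let ι : ↥L →ₐ[ℚ] ℂ :=
    { toRingHom := L.subtype
      commutes' := fun q => by
        rw [eq_ratCast (algebraMap ℚ ↥L) q, eq_ratCast (algebraMap ℚ ℂ) q]
        simp }
  exact ⟨fun x => (isAlgebraic_algHom_iff ι Subtype.val_injective).mp (halg x)⟩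

lemma exists_embedding (L : Subfield ℂ) (halg : ∀ x : ↥L, IsAlgebraic ℚ (x : ℂ)) (β : ↥L)
    {r : ℂ} (hr : Polynomial.aeval r (minpoly ℚ β) = 0) :
    ∃ σ : ↥L →+* ℂ, σ β = r := by
  haveI := algebraicL L halg
  obtain ⟨φ, hφ⟩ := IntermediateField.exists_algHom_of_splits_of_aeval
    (fun s => ⟨(Algebra.IsAlgebraic.isAlgebraic s).isIntegral, IsAlgClosed.splits _⟩) hr
  exact ⟨φ.toRingHom, hφ⟩

open Polynomial in
lemma eq_zero_of_embeds_small (L : Subfield ℂ) (halg : ∀ x : ↥L, IsAlgebraic ℚ (x : ℂ))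
    (β : ↥L) (hint : IsIntegral ℤ β)
    (hsmall : ∀ σ : ↥L →+* ℂ, ‖σ β‖ < 1) : β = 0 := by
  by_contra hβ0
  haveI := algebraicL L halg
  have hβQ : IsIntegral ℚ β := (Algebra.IsAlgebraic.isAlgebraic β).isIntegral
  have hpmonic : (minpoly ℚ β).Monic := minpoly.monic hβQ
  have hPmonic : ((minpoly ℚ β).map (algebraMap ℚ ℂ)).Monic := hpmonic.map _
  have hsplit : ((minpoly ℚ β).map (algebraMap ℚ ℂ)).Splits := by
    exact IsAlgClosed.splits _
  have hroots : ((minpoly ℚ β).map (algebraMap ℚ ℂ)) =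
      (((minpoly ℚ β).map (algebraMap ℚ ℂ)).roots.map fun a => X - C a).prod :=
    hsplit.eq_prod_roots_of_monic hPmonic
  -- evaluate at 0
  have hev : ((minpoly ℚ β).map (algebraMap ℚ ℂ)).eval 0 =
      (((minpoly ℚ β).map (algebraMap ℚ ℂ)).roots.map fun a => -a).prod := by
    conv_lhs => rw [hroots]
    rw [eval_multiset_prod, Multiset.map_map]
    congr 1
    exact Multiset.map_congr rfl fun a _ => by simp
  have habs : ‖((minpoly ℚ β).map (algebraMap ℚ ℂ)).eval 0‖ =
      (((minpoly ℚ β).map (algebraMap ℚ ℂ)).roots.map fun a => ‖a‖).prod := by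
    rw [hev, show ‖(((minpoly ℚ β).map (algebraMap ℚ ℂ)).roots.map fun a => -a).prod‖ =
      (normHom : ℂ →*₀ ℝ) (((minpoly ℚ β).map (algebraMap ℚ ℂ)).roots.map fun a => -a).prod from rfl,
      map_multiset_prod, Multiset.map_map]
    congr 1
    exact Multiset.map_congr rfl fun a _ => by simp
  -- each root is small
  have hroot_small : ∀ r ∈ ((minpoly ℚ β).map (algebraMap ℚ ℂ)).roots, ‖r‖ < 1 := by
    intro r hrmem
    have hr0 : (Polynomial.aeval r) (minpoly ℚ β) = 0 := by
      have hmem2 := (Polynomial.mem_roots (hPmonic.ne_zero)).mp hrmem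
      rw [Polynomial.aeval_def, ← Polynomial.eval_map]
      exact hmem2
    obtain ⟨σ, hσ⟩ := exists_embedding L halg β hr0
    rw [← hσ]
    exact hsmall σ
  -- roots are nonempty
  have hcard : ((minpoly ℚ β).map (algebraMap ℚ ℂ)).roots.card =
      ((minpoly ℚ β).map (algebraMap ℚ ℂ)).natDegree := (splits_iff_card_roots).mp hsplit
  have hdeg : 0 < ((minpoly ℚ β).map (algebraMap ℚ ℂ)).natDegree := by
    rw [natDegree_map]
    exact minpoly.natDegree_pos hβQ
  have hroots_ne : ((minpoly ℚ β).map (algebraMap ℚ ℂ)).roots ≠ 0 := by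
    intro hc
    rw [hc, Multiset.card_zero] at hcard
    omega
  -- product is < 1
  have hprod : (((minpoly ℚ β).map (algebraMap ℚ ℂ)).roots.map fun a => ‖a‖).prod < 1 := by
    apply multiset_prod_lt_one
    · simpa [Multiset.map_eq_zero] using hroots_ne
    · intro x hx
      rw [Multiset.mem_map] at hx
      obtain ⟨r, hrmem, rfl⟩ := hx
      exact ⟨norm_nonneg _, hroot_small r hrmem⟩
  -- the constant coefficient is a nonzero integer
  have hqeq : minpoly ℚ β = (minpoly ℤ β).map (algebraMap ℤ ℚ) :=
    minpoly.isIntegrallyClosed_eq_field_fractions ℚ ↥L hint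
  have hc0 : ((minpoly ℚ β).map (algebraMap ℚ ℂ)).eval 0 =
      (((minpoly ℤ β).coeff 0 : ℤ) : ℂ) := by
    rw [← Polynomial.coeff_zero_eq_eval_zero, Polynomial.coeff_map, hqeq, Polynomial.coeff_map]
    simp
  have hc0ne : (minpoly ℤ β).coeff 0 ≠ 0 := by
    intro hc
    have h1 : (minpoly ℚ β).coeff 0 ≠ 0 := minpoly.coeff_zero_ne_zero hβQ hβ0
    rw [hqeq, Polynomial.coeff_map, hc] at h1
    simp at h1
  have hge : (1 : ℝ) ≤ ‖(((minpoly ℤ β).coeff 0 : ℤ) : ℂ)‖ := by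
    rw [Complex.norm_intCast]
    have := Int.one_le_abs (by exact_mod_cast hc0ne : (minpoly ℤ β).coeff 0 ≠ 0)
    calc (1 : ℝ) ≤ ((|(minpoly ℤ β).coeff 0| : ℤ) : ℝ) := by exact_mod_cast this
      _ = |(((minpoly ℤ β).coeff 0 : ℤ) : ℝ)| := by push_cast; rfl
  rw [hc0] at habs
  rw [habs] at hge
  exact absurd (lt_of_le_of_lt hge hprod) (lt_irrefl 1)

lemma conj_comm_embed (K L : Subfield ℂ) (h : IsTIQExt K L) (σ : ↥L →+* ℂ) (x : ↥L) :
    σ (conjL L h.conj_closed x) = (starRingEnd ℂ) (σ x) := by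
  letI : Algebra ↥K ↥L := (Subfield.inclusion h.le).toAlgebra
  have hdeg : Module.finrank ↥K ↥L = 2 := h.deg
  haveI : FiniteDimensional ↥K ↥L :=
    FiniteDimensional.of_finrank_pos (by rw [hdeg]; norm_num)
  letI : Algebra ↥K ℂ := (σ.comp (Subfield.inclusion h.le)).toAlgebra
  have hKreal : ∀ k : ↥K, ((k : ℂ)).im = 0 := h.tot_real K.subtype
  let τ₀ : ↥L →ₐ[↥K] ℂ := { toRingHom := σ, commutes' := fun k => rfl }
  let τ₁ : ↥L →ₐ[↥K] ℂ :=
    { toRingHom := σ.comp (conjL L h.conj_closed)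
      commutes' := by
        intro k
        show σ (conjL L h.conj_closed (Subfield.inclusion h.le k)) = σ (Subfield.inclusion h.le k)
        congr 1
        apply Subtype.ext
        show (starRingEnd ℂ) ((k : ℂ)) = (k : ℂ)
        rw [Complex.conj_eq_iff_im]
        exact hKreal k }
  let τ₂ : ↥L →ₐ[↥K] ℂ :=
    { toRingHom := (starRingEnd ℂ).comp σ
      commutes' := by
        intro k
        show (starRingEnd ℂ) (σ (Subfield.inclusion h.le k)) = σ (Subfield.inclusion h.le k)
        rw [Complex.conj_eq_iff_im]
        exact h.tot_real (σ.comp (Subfield.inclusion h.le)) k }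
  have hinj : Function.Injective σ := σ.injective
  have hne10 : τ₁ ≠ τ₀ := by
    intro hEq
    obtain ⟨y, hy⟩ := h.tot_imaginary L.subtype
    apply hy
    have h1 : σ (conjL L h.conj_closed y) = σ y := by
      have := RingHom.congr_fun (congrArg AlgHom.toRingHom hEq) y
      exact this
    have h2 : conjL L h.conj_closed y = y := hinj h1
    have h3 : (starRingEnd ℂ) ((y : ℂ)) = (y : ℂ) := congrArg Subtype.val h2
    exact Complex.conj_eq_iff_im.mp h3
  have hne20 : τ₂ ≠ τ₀ := by
    intro hEq
    obtain ⟨y, hy⟩ := h.tot_imaginary σ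
    apply hy
    have h1 : (starRingEnd ℂ) (σ y) = σ y := by
      have := RingHom.congr_fun (congrArg AlgHom.toRingHom hEq) y
      exact this
    exact Complex.conj_eq_iff_im.mp h1
  have hcard : Fintype.card (↥L →ₐ[↥K] ℂ) = 2 := by
    rw [AlgHom.card]; exact hdeg
  have h12 : τ₁ = τ₂ := by
    by_contra hne
    have h3 : 2 < Fintype.card (↥L →ₐ[↥K] ℂ) :=
      Fintype.two_lt_card_iff.mpr ⟨τ₀, τ₁, τ₂, Ne.symm hne10, Ne.symm hne20, hne⟩
    omega
  have h13 := RingHom.congr_fun (congrArg AlgHom.toRingHom h12) x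
  exact h13

set_option synthInstance.maxHeartbeats 1000000 in
set_option maxHeartbeats 1000000 in
lemma real_mem_K (K L : Subfield ℂ) (h : IsTIQExt K L) {x : ℂ} (hxL : x ∈ L)
    (hxim : x.im = 0) : x ∈ K := by
  letI : Algebra ↥K ↥L := (Subfield.inclusion h.le).toAlgebra
  have hdeg : Module.finrank ↥K ↥L = 2 := h.deg
  haveI : FiniteDimensional ↥K ↥L :=
    FiniteDimensional.of_finrank_pos (by rw [hdeg]; norm_num)
  have hKreal : ∀ k : ↥K, ((k : ℂ)).im = 0 := h.tot_real K.subtype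
  set x' : ↥L := ⟨x, hxL⟩ with hx'
  -- the real elements of L form an intermediate field
  let SA : Subalgebra ↥K ↥L :=
    { carrier := {y : ↥L | ((y : ℂ)).im = 0}
      one_mem' := by simp
      mul_mem' := by
        intro a b ha hb
        simp only [Set.mem_setOf_eq] at *
        show ((a : ℂ) * (b : ℂ)).im = 0
        rw [Complex.mul_im, ha, hb]
        ring
      add_mem' := by
        intro a b ha hb
        simp only [Set.mem_setOf_eq] at *
        show ((a : ℂ) + (b : ℂ)).im = 0
        rw [Complex.add_im, ha, hb]
        ring
      algebraMap_mem' := fun k => hKreal k }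
  have hSAinv : ∀ y ∈ SA, y⁻¹ ∈ SA := by
    intro y hy
    show (((y⁻¹ : ↥L) : ℂ)).im = 0
    have : ((y⁻¹ : ↥L) : ℂ) = ((y : ↥L) : ℂ)⁻¹ := by
      push_cast
      rfl
    rw [this, Complex.inv_im, hy]
    simp
  let S' : IntermediateField ↥K ↥L := SA.toIntermediateField hSAinv
  have hx'S : x' ∈ S' := hxim
  have hfin : Module.finrank ↥K ↥(IntermediateField.adjoin ↥K {x'}) *
      Module.finrank ↥(IntermediateField.adjoin ↥K {x'}) ↥L = 2 := by
    rw [Module.finrank_mul_finrank]; exact hdeg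
  have hdvd : Module.finrank ↥K ↥(IntermediateField.adjoin ↥K {x'}) ∣ 2 :=
    ⟨_, hfin.symm⟩
  rcases (Nat.prime_two.eq_one_or_self_of_dvd _ hdvd) with h1 | h2
  · -- adjoin is ⊥, so x lies in K
    have hbot : IntermediateField.adjoin ↥K {x'} = ⊥ :=
      IntermediateField.finrank_eq_one_iff.mp h1
    have hmem : x' ∈ IntermediateField.adjoin ↥K {x'} :=
      IntermediateField.mem_adjoin_simple_self ↥K x'
    rw [hbot, IntermediateField.mem_bot] at hmem
    obtain ⟨k, hk⟩ := hmem
    have : ((Subfield.inclusion h.le k : ↥L) : ℂ) = x := congrArg Subtype.val hk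
    rw [← this]
    exact k.2
  · -- adjoin is everything; contradiction with total imaginarity
    exfalso
    have hfr : Module.finrank ↥(IntermediateField.adjoin ↥K {x'}) ↥L = 1 := by
      rw [h2] at hfin
      omega
    have htop : IntermediateField.adjoin ↥K {x'} = ⊤ := by
      apply IntermediateField.eq_of_le_of_finrank_le le_top
      rw [IntermediateField.finrank_top']
      rw [hdeg, h2]
    have hle : IntermediateField.adjoin ↥K {x'} ≤ S' :=
      IntermediateField.adjoin_le_iff.mpr (by simpa using hx'S)
    obtain ⟨y, hy⟩ := h.tot_imaginary L.subtype
    apply hy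
    have : y ∈ S' := hle (htop ▸ IntermediateField.mem_top)
    exact this

/-- Let `L` be a totally imaginary quadratic extension of the totally real field `K`. Then for
every unit `u` of `R_{2,L}`, the square `u²` lies in `K`, belongs to `R_{2,K}`, and is a unit of
`R_{2,K}`: in short, `(R_{2,L}ˣ)² ⊆ R_{2,K}ˣ`. -/
theorem sq_unit_mem (K L : Subfield ℂ) (h : IsTIQExt K L) (u : (Rring 2 twoNZ L)ˣ) :
    ((u : Rring 2 twoNZ L) : ℂ) ^ 2 ∈ K ∧
    ((u : Rring 2 twoNZ L) : ℂ) ^ 2 ∈ Rring 2 twoNZ K ∧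
    ∃ v : (Rring 2 twoNZ K)ˣ, ((v : Rring 2 twoNZ K) : ℂ) = ((u : Rring 2 twoNZ L) : ℂ) ^ 2 := by
  classical
  obtain ⟨a, ha, hUa⟩ := unit_shape L u
  obtain ⟨b, hb, hVb⟩ := unit_shape L u⁻¹
  set U : ℂ := ((u : Rring 2 twoNZ L) : ℂ) with hUdef
  set V : ℂ := (((u⁻¹ : (Rring 2 twoNZ L)ˣ) : Rring 2 twoNZ L) : ℂ) with hVdef
  have hUset : U ∈ Rset 2 L := (u : Rring 2 twoNZ L).2
  have hVset : V ∈ Rset 2 L := ((u⁻¹ : (Rring 2 twoNZ L)ˣ) : Rring 2 twoNZ L).2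
  have hUO : U ∈ ringOfInt L := hUset.1
  have hVO : V ∈ ringOfInt L := hVset.1
  have hUL : U ∈ L := hUO.1
  have hVL : V ∈ L := hVO.1
  have hUV : U * V = 1 := by
    rw [hUdef, hVdef]
    exact_mod_cast congrArg (fun x : Rring 2 twoNZ L => (x : ℂ)) u.mul_inv
  have hcV_L : (starRingEnd ℂ) V ∈ L := h.conj_closed V hVL
  have hcV_O : (starRingEnd ℂ) V ∈ ringOfInt L := conj_mem_ringOfInt h.conj_closed hVO
  have hca_O : (starRingEnd ℂ) a ∈ ringOfInt L := conj_mem_ringOfInt h.conj_closed ha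
  have hconjUV : (starRingEnd ℂ) U * (starRingEnd ℂ) V = 1 := by
    rw [← map_mul, hUV, map_one]
  have hV0 : V ≠ 0 := right_ne_zero_of_mul_eq_one hUV
  have hU0 : U ≠ 0 := left_ne_zero_of_mul_eq_one hUV
  have hcV0 : (starRingEnd ℂ) V ≠ 0 := right_ne_zero_of_mul_eq_one hconjUV
  -- Key step: (U * conj V)^2 = 1
  have hsq : (U * (starRingEnd ℂ) V) ^ 2 = 1 := by
    by_cases hζneg : U * (starRingEnd ℂ) V = -1
    · rw [hζneg]; ring
    have hcU : (starRingEnd ℂ) U = 1 + 2 * (starRingEnd ℂ) a := by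
      rw [hUa, map_add, map_mul, map_one, map_ofNat]
    have hβO : (a - (starRingEnd ℂ) a) * (starRingEnd ℂ) V ∈ ringOfInt L :=
      (ringOfInt L).mul_mem ((ringOfInt L).sub_mem ha hca_O) hcV_O
    have hβL : (a - (starRingEnd ℂ) a) * (starRingEnd ℂ) V ∈ L := hβO.1
    have hβrel : U * (starRingEnd ℂ) V - 1
        = 2 * ((a - (starRingEnd ℂ) a) * (starRingEnd ℂ) V) := by
      calc U * (starRingEnd ℂ) V - 1
          = U * (starRingEnd ℂ) V - (starRingEnd ℂ) U * (starRingEnd ℂ) V := by rw [hconjUV]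
        _ = (U - (starRingEnd ℂ) U) * (starRingEnd ℂ) V := by ring
        _ = 2 * ((a - (starRingEnd ℂ) a) * (starRingEnd ℂ) V) := by rw [hcU, hUa]; ring
    have hζL : U * (starRingEnd ℂ) V ∈ L := L.mul_mem hUL hcV_L
    have hβ'int : IsIntegral ℤ (⟨(a - (starRingEnd ℂ) a) * (starRingEnd ℂ) V, hβL⟩ : ↥L) :=
      (isIntegral_algHom_iff L.subtype.toIntAlgHom Subtype.val_injective).mp hβO.2
    have hζ'eq : (⟨U * (starRingEnd ℂ) V, hζL⟩ : ↥L)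
        = (⟨U, hUL⟩ : ↥L) * conjL L h.conj_closed ⟨V, hVL⟩ := by
      apply Subtype.ext; rfl
    have hUV' : (⟨U, hUL⟩ : ↥L) * ⟨V, hVL⟩ = 1 := Subtype.ext hUV
    have hrel' : (⟨U * (starRingEnd ℂ) V, hζL⟩ : ↥L) - 1
        = 2 * ⟨(a - (starRingEnd ℂ) a) * (starRingEnd ℂ) V, hβL⟩ := by
      apply Subtype.ext
      push_cast
      exact hβrel
    have hsmall : ∀ σ : ↥L →+* ℂ,
        ‖σ ⟨(a - (starRingEnd ℂ) a) * (starRingEnd ℂ) V, hβL⟩‖ < 1 := by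
      intro σ
      have hσζ : σ ⟨U * (starRingEnd ℂ) V, hζL⟩
          = σ ⟨U, hUL⟩ * (starRingEnd ℂ) (σ ⟨V, hVL⟩) := by
        rw [hζ'eq, map_mul, conj_comm_embed K L h σ ⟨V, hVL⟩]
      have habsζ : ‖σ ⟨U * (starRingEnd ℂ) V, hζL⟩‖ = 1 := by
        rw [hσζ, norm_mul, Complex.norm_conj, ← norm_mul, ← map_mul, hUV', map_one, norm_one]
      have hσζne : σ ⟨U * (starRingEnd ℂ) V, hζL⟩ ≠ -1 := by
        intro hEq
        apply hζneg
        have h1 : σ ⟨U * (starRingEnd ℂ) V, hζL⟩ = σ (-1) := by rw [hEq, map_neg, map_one]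
        have h2 : (⟨U * (starRingEnd ℂ) V, hζL⟩ : ↥L) = -1 := σ.injective h1
        have h3 := congrArg Subtype.val h2
        simpa using h3
      have hβσ : (2 : ℂ) * σ ⟨(a - (starRingEnd ℂ) a) * (starRingEnd ℂ) V, hβL⟩
          = σ ⟨U * (starRingEnd ℂ) V, hζL⟩ - 1 := by
        calc (2 : ℂ) * σ ⟨(a - (starRingEnd ℂ) a) * (starRingEnd ℂ) V, hβL⟩
            = σ (2 * ⟨(a - (starRingEnd ℂ) a) * (starRingEnd ℂ) V, hβL⟩) := by
              rw [map_mul, map_ofNat]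
          _ = σ (⟨U * (starRingEnd ℂ) V, hζL⟩ - 1) := by rw [hrel']
          _ = σ ⟨U * (starRingEnd ℂ) V, hζL⟩ - 1 := by rw [map_sub, map_one]
      have h2' : ‖σ ⟨U * (starRingEnd ℂ) V, hζL⟩ - 1‖ < 2 :=
        abs_sub_one_lt_two habsζ hσζne
      rw [← hβσ, norm_mul] at h2'
      simp only [Complex.norm_ofNat] at h2'
      linarith
    have hβ0 : (⟨(a - (starRingEnd ℂ) a) * (starRingEnd ℂ) V, hβL⟩ : ↥L) = 0 :=
      eq_zero_of_embeds_small L h.alg _ hβ'int hsmall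
    have hβc : (a - (starRingEnd ℂ) a) * (starRingEnd ℂ) V = 0 := by
      have := congrArg Subtype.val hβ0
      simpa using this
    have hζ1 : U * (starRingEnd ℂ) V = 1 := by
      rw [hβc] at hβrel
      linear_combination hβrel
    rw [hζ1]; ring
  -- conclusions from the key step
  have hUcV2 : U ^ 2 * ((starRingEnd ℂ) V) ^ 2 = 1 := by
    rw [← mul_pow]; exact hsq
  have hcUcV2 : ((starRingEnd ℂ) U) ^ 2 * ((starRingEnd ℂ) V) ^ 2 = 1 := by
    rw [← mul_pow, hconjUV]; norm_num
  have hU2V2 : U ^ 2 * V ^ 2 = 1 := by rw [← mul_pow, hUV]; norm_num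
  have hconjU2 : (starRingEnd ℂ) (U ^ 2) = U ^ 2 := by
    rw [map_pow]
    exact mul_right_cancel₀ (pow_ne_zero 2 hcV0) (hcUcV2.trans hUcV2.symm)
  have hconjV2 : (starRingEnd ℂ) (V ^ 2) = V ^ 2 := by
    rw [map_pow]
    exact mul_left_cancel₀ (pow_ne_zero 2 hU0) (hUcV2.trans hU2V2.symm)
  have hU2K : U ^ 2 ∈ K :=
    real_mem_K K L h (pow_mem hUL 2) (Complex.conj_eq_iff_im.mp hconjU2)
  have hV2K : V ^ 2 ∈ K :=
    real_mem_K K L h (pow_mem hVL 2) (Complex.conj_eq_iff_im.mp hconjV2)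
  have h2K : (2 : ℂ) ∈ K := by
    rw [show (2 : ℂ) = 1 + 1 by norm_num]
    exact K.add_mem K.one_mem K.one_mem
  have h2OL : (2 : ℂ) ∈ ringOfInt L := by
    have := natCast_mem (ringOfInt L) 2
    exact_mod_cast this
  -- U^2 and V^2 lie in R_{2,K}
  have hbUO_L : 2 * a + 2 * a ^ 2 ∈ ringOfInt L :=
    (ringOfInt L).add_mem ((ringOfInt L).mul_mem h2OL ha)
      ((ringOfInt L).mul_mem h2OL (pow_mem ha 2))
  have hbVO_L : 2 * b + 2 * b ^ 2 ∈ ringOfInt L :=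
    (ringOfInt L).add_mem ((ringOfInt L).mul_mem h2OL hb)
      ((ringOfInt L).mul_mem h2OL (pow_mem hb 2))
  have hU2eq : U ^ 2 = 1 + 2 * (2 * a + 2 * a ^ 2) := by rw [hUa]; ring
  have hV2eq : V ^ 2 = 1 + 2 * (2 * b + 2 * b ^ 2) := by rw [hVb]; ring
  have hbUmemK : 2 * a + 2 * a ^ 2 ∈ K := by
    have heq : 2 * a + 2 * a ^ 2 = (U ^ 2 - 1) * (2 : ℂ)⁻¹ := by
      rw [hU2eq]; field_simp; ring
    rw [heq]
    exact K.mul_mem (K.sub_mem hU2K K.one_mem) (K.inv_mem h2K)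
  have hbVmemK : 2 * b + 2 * b ^ 2 ∈ K := by
    have heq : 2 * b + 2 * b ^ 2 = (V ^ 2 - 1) * (2 : ℂ)⁻¹ := by
      rw [hV2eq]; field_simp; ring
    rw [heq]
    exact K.mul_mem (K.sub_mem hV2K K.one_mem) (K.inv_mem h2K)
  have hU2OK : U ^ 2 ∈ ringOfInt K := ⟨hU2K, hUO.2.pow 2⟩
  have hbUOK : 2 * a + 2 * a ^ 2 ∈ ringOfInt K := ⟨hbUmemK, hbUO_L.2⟩
  have hU2R : U ^ 2 ∈ Rring 2 twoNZ K :=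
    Rset_norm twoNZ hU2OK hbUOK (j := 1) (by push_cast; exact hU2eq)
  have hV2OK : V ^ 2 ∈ ringOfInt K := ⟨hV2K, hVO.2.pow 2⟩
  have hbVOK : 2 * b + 2 * b ^ 2 ∈ ringOfInt K := ⟨hbVmemK, hbVO_L.2⟩
  have hV2R : V ^ 2 ∈ Rring 2 twoNZ K :=
    Rset_norm twoNZ hV2OK hbVOK (j := 1) (by push_cast; exact hV2eq)
  refine ⟨hU2K, hU2R, ⟨⟨U ^ 2, hU2R⟩, ⟨V ^ 2, hV2R⟩, ?_, ?_⟩, rfl⟩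
  · apply Subtype.ext
    show U ^ 2 * V ^ 2 = 1
    exact hU2V2
  · apply Subtype.ext
    show V ^ 2 * U ^ 2 = 1
    rw [mul_comm]; exact hU2V2

end
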